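/- Let f ∈ K[x₁,x₂,x₃] be irreducible with positive degree in x₃, defining a surface that is not the plane x₃ = 0, and let p₁,p₂ ∈ K(x₃) with f(p₁(x₃),p₂(x₃),0) = 0. Then the polynomial g(x₁,x₂,x₃,t₂) = numer(f(p₁(x₃)+t₂x₁, p₂(x₃)+t₂x₂, t₂)) is not of the form λ·t₂^r with λ ∈ K∖{0} and r ∈ ℕ. (Proof uses: since deg_{x₃} f > 0 there is a zero (a₁,a₂,a₃) of f with a₃ ≠ 0, and substituting x_j⁰ = (a_j - p_j(x₃))/a₃ gives g(x₁⁰,x₂⁰,x₃,a₃) = 0, contradicting g = λ·a₃^r ≠ 0.) -/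

import Mathlib

open MvPolynomial

lemma mv_isUnit_eq_C {K : Type*} [Field K] :
    ∀ (n : ℕ) (p : MvPolynomial (Fin n) K), IsUnit p → ∃ c : K, p = MvPolynomial.C c := by
  intro n
  induction n with
  | zero => intro p _; exact ⟨_, MvPolynomial.eq_C_of_isEmpty p⟩
  | succ n ih =>
    intro p hp
    have hF : IsUnit (MvPolynomial.finSuccEquiv K n p) := hp.map _
    obtain ⟨r, hr, hrp⟩ := Polynomial.isUnit_iff.mp hF
    obtain ⟨c, rfl⟩ := ih r hr
    refine ⟨c, ?_⟩
    apply (MvPolynomial.finSuccEquiv K n).injective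
    rw [← hrp]
    simp [MvPolynomial.finSuccEquiv_apply]

lemma exists_zero_ne {K : Type*} [Field K] [CharZero K] [IsAlgClosed K]
    (f : MvPolynomial (Fin 3) K) (hirr : Irreducible f)
    (hdeg : 0 < MvPolynomial.degreeOf 2 f)
    (hplane : ∀ u : K, f ≠ MvPolynomial.C u * MvPolynomial.X 2) :
    ∃ a : Fin 3 → K, MvPolynomial.eval a f = 0 ∧ a 2 ≠ 0 := by
  set e : Fin 3 ≃ Fin 3 := Equiv.swap 0 2 with he
  set f' : MvPolynomial (Fin 3) K := MvPolynomial.rename e f with hf'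
  have hdeg' : 0 < MvPolynomial.degreeOf 0 f' := by
    have := MvPolynomial.degreeOf_rename_of_injective (p := f) (f := e) e.injective 2
    have he2 : e 2 = 0 := by decide
    rw [he2] at this
    rw [hf', this]; exact hdeg
  set F := MvPolynomial.finSuccEquiv K 2 f' with hF
  have hdF : 0 < F.natDegree := by
    rw [hF, MvPolynomial.natDegree_finSuccEquiv]; exact hdeg'
  have hFne : F ≠ 0 := fun h => by simp [h] at hdF
  have hirr' : Irreducible f' := hirr.map (MvPolynomial.renameEquiv K e)
  have hc0 : F.coeff 0 ≠ 0 := by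
    intro h0
    have hXdvd : Polynomial.X ∣ F := Polynomial.X_dvd_iff.mpr h0
    obtain ⟨cq, hcq⟩ := hXdvd
    have hf'eq : f' = MvPolynomial.X 0 * (MvPolynomial.finSuccEquiv K 2).symm cq := by
      apply (MvPolynomial.finSuccEquiv K 2).injective
      rw [map_mul]
      simp only [MvPolynomial.finSuccEquiv_X_zero, AlgEquiv.apply_symm_apply]
      exact hcq
    have hXnu : ¬ IsUnit (MvPolynomial.X (R := K) (0 : Fin 3)) := by
      intro hu
      obtain ⟨c, hc⟩ := mv_isUnit_eq_C 3 _ hu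
      have := congrArg (MvPolynomial.coeff (Finsupp.single (0 : Fin 3) 1)) hc
      rw [MvPolynomial.coeff_X, MvPolynomial.coeff_C,
        if_pos (rfl : Finsupp.single (0 : Fin 3) 1 = Finsupp.single 0 1),
        if_neg (by simp [eq_comm, Finsupp.single_eq_zero])] at this
      exact one_ne_zero this
    have hu : IsUnit ((MvPolynomial.finSuccEquiv K 2).symm cq) :=
      (hirr'.isUnit_or_isUnit hf'eq).resolve_left hXnu
    obtain ⟨u, hu_eq⟩ := mv_isUnit_eq_C 3 _ hu
    apply hplane u
    have : f = MvPolynomial.rename e.symm f' := by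
      rw [hf', MvPolynomial.rename_rename, Equiv.symm_comp_self, MvPolynomial.rename_id,
        AlgHom.id_apply]
    rw [this, hf'eq, hu_eq, map_mul, MvPolynomial.rename_X, MvPolynomial.rename_C]
    have : e.symm 0 = 2 := by decide
    rw [this, mul_comm]
  have hlc : F.leadingCoeff ≠ 0 := Polynomial.leadingCoeff_ne_zero.mpr hFne
  have hprod : F.coeff 0 * F.leadingCoeff ≠ 0 := mul_ne_zero hc0 hlc
  have hb : ∃ b : Fin 2 → K, MvPolynomial.eval b (F.coeff 0 * F.leadingCoeff) ≠ 0 := by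
    by_contra h
    push_neg at h
    exact hprod (MvPolynomial.funext fun x => by simp [h x])
  obtain ⟨b, hbne⟩ := hb
  rw [map_mul] at hbne
  have hb0 : MvPolynomial.eval b (F.coeff 0) ≠ 0 := fun h => hbne (by simp [h])
  have hbl : MvPolynomial.eval b F.leadingCoeff ≠ 0 := fun h => hbne (by simp [h])
  set P : Polynomial K := F.map (MvPolynomial.eval b) with hP
  have hdegP : P.degree = F.degree := Polynomial.degree_map_eq_of_leadingCoeff_ne_zero _ hbl
  have hPdeg : P.degree ≠ 0 := by
    have hpos : 0 < P.degree := hdegP ▸ Polynomial.natDegree_pos_iff_degree_pos.mp hdF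
    intro h
    rw [h] at hpos
    exact lt_irrefl _ hpos
  obtain ⟨t, ht⟩ := IsAlgClosed.exists_root P hPdeg
  have hPt : P.eval t = 0 := ht
  have htne : t ≠ 0 := by
    intro h
    rw [h] at hPt
    rw [← Polynomial.coeff_zero_eq_eval_zero, hP, Polynomial.coeff_map] at hPt
    exact hb0 hPt
  refine ⟨(Fin.cons t b) ∘ e, ?_, ?_⟩
  · have := MvPolynomial.eval_rename (k := e) (Fin.cons t b) f
    rw [← hf'] at this
    rw [← this, MvPolynomial.eval_eq_eval_mv_eval', ← hF, ← hP, hPt]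
  · have he2 : e 2 = 0 := by decide
    simp only [Function.comp_apply, he2, Fin.cons_zero]
    exact htne

/-- If `f` is irreducible with positive degree in `x₃`, not defining the
plane `x₃ = 0`, and `f(p₁(x₃), p₂(x₃), 0) = 0`, then
`g = numer(f(p₁(x₃)+t₂x₁, p₂(x₃)+t₂x₂, t₂))` is not of the form `λ·t₂^r` with
`λ ∈ K∖{0}` and `r ∈ ℕ`. -/
theorem numerator_not_monomial_in_t2
    (K : Type*) [Field K] [CharZero K] [IsAlgClosed K]
    (f : MvPolynomial (Fin 3) K) (hirr : Irreducible f)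
    (hdeg : 0 < MvPolynomial.degreeOf 2 f)
    (hplane : ∀ u : K, f ≠ MvPolynomial.C u * MvPolynomial.X 2)
    (p₁ p₂ : RatFunc K)
    (hcurve : MvPolynomial.aeval ![p₁, p₂, 0] f = 0)
    (d : RatFunc K) (hd : d ≠ 0)
    (g : MvPolynomial (Fin 3) (RatFunc K))
    (hg : g = MvPolynomial.C d *
      MvPolynomial.aeval
        ![MvPolynomial.C p₁ + MvPolynomial.X 2 * MvPolynomial.X 0,
          MvPolynomial.C p₂ + MvPolynomial.X 2 * MvPolynomial.X 1,
          MvPolynomial.X 2] f) :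
    ∀ (lam : K) (r : ℕ), lam ≠ 0 →
      g ≠ MvPolynomial.C (algebraMap K (RatFunc K) lam) * (MvPolynomial.X 2) ^ r := by
  intro lam r hlam hEq
  obtain ⟨a, ha, ha2⟩ := exists_zero_ne f hirr hdeg hplane
  set φ := algebraMap K (RatFunc K) with hφ
  have hA2 : φ (a 2) ≠ 0 := fun h => ha2 ((map_eq_zero φ).mp h)
  set v : Fin 3 → RatFunc K :=
    ![(φ (a 0) - p₁) / φ (a 2), (φ (a 1) - p₂) / φ (a 2), φ (a 2)] with hv
  set w : Fin 3 → MvPolynomial (Fin 3) (RatFunc K) :=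
    ![MvPolynomial.C p₁ + MvPolynomial.X 2 * MvPolynomial.X 0,
      MvPolynomial.C p₂ + MvPolynomial.X 2 * MvPolynomial.X 1,
      MvPolynomial.X 2] with hw
  have h1 : MvPolynomial.eval v g = 0 := by
    rw [hg, map_mul]
    have hcomp : (MvPolynomial.eval v).comp
        (algebraMap K (MvPolynomial (Fin 3) (RatFunc K))) = φ := by
      ext x
      rw [RingHom.comp_apply, MvPolynomial.algebraMap_apply, MvPolynomial.eval_C]
    have key : (MvPolynomial.eval v) (MvPolynomial.aeval w f) =
        MvPolynomial.eval₂ φ (⇑(MvPolynomial.eval v) ∘ w) f := by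
      rw [MvPolynomial.aeval_def, MvPolynomial.eval₂_comp_left (MvPolynomial.eval v), hcomp]
    have hw' : (⇑(MvPolynomial.eval v) ∘ w) = fun i => φ (a i) := by
      funext i
      fin_cases i
      · show MvPolynomial.eval v (w 0) = φ (a 0)
        rw [hw, hv]
        simp only [Function.comp_apply, Matrix.cons_val_zero, Matrix.cons_val_one,
          Matrix.head_cons, Matrix.cons_val_two, Matrix.tail_cons, map_add, map_mul,
          MvPolynomial.eval_C, MvPolynomial.eval_X]
        rw [mul_comm, div_mul_cancel₀ _ hA2]
        ring
      · show MvPolynomial.eval v (w 1) = φ (a 1)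
        rw [hw, hv]
        simp only [Function.comp_apply, Matrix.cons_val_zero, Matrix.cons_val_one,
          Matrix.head_cons, Matrix.cons_val_two, Matrix.tail_cons, map_add, map_mul,
          MvPolynomial.eval_C, MvPolynomial.eval_X]
        rw [mul_comm, div_mul_cancel₀ _ hA2]
        ring
      · show MvPolynomial.eval v (w 2) = φ (a 2)
        rw [hw, hv]
        simp
    have h2 : φ (MvPolynomial.eval a f) = MvPolynomial.eval₂ φ (fun i => φ (a i)) f := by
      rw [← MvPolynomial.eval₂_id (g := a) f, MvPolynomial.eval₂_comp_left φ]
      simp [Function.comp_def]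
    rw [key, hw', ← h2, ha, map_zero, mul_zero]
  rw [hEq] at h1
  simp only [map_mul, map_pow, MvPolynomial.eval_C, MvPolynomial.eval_X] at h1
  have hv2 : v 2 = φ (a 2) := by simp [hv]
  rw [hv2] at h1
  exact (mul_ne_zero (fun h => hlam ((map_eq_zero φ).mp h)) (pow_ne_zero r hA2)) h1
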